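/- arXiv:1907.00406 — 5 statements merged into one kernel-verified Lean document; each statement's English description precedes it below -/
import Mathlib

section
/- Per-step unconditional stability of the BDF2 scheme for a linear material law (Proposition 3.2, abstract form). Assume given u₋, u₀, u₊ ∈ V, p ∈ Q, X₋, X₀, X₊, Ẋ₋, Ẋ₀, Ẋ₊ ∈ S, λ ∈ Λ and w ∈ S such that: (i) ρ_f ⟨(3u₊ − 4u₀ + u₋)/(2Δt), u₊⟩ + b(u₊, u₊, u₊) + ν‖G u₊‖² − ⟨d u₊, p⟩ + c(λ, w) = 0; (ii) ⟨d u₊, q⟩ = 0 for all q ∈ Q; (iii) c(μ, w − (3X₊ − 4X₀ + X₋)/(2Δt)) = 0 for all μ ∈ Λ; (iv) Ẋ₊ = (3X₊ − 4X₀ + X₋)/(2Δt); (v) δρ ⟨(3Ẋ₊ − 4Ẋ₀ + Ẋ₋)/(2Δt), Y⟩ + κ⟨G_s X₊, G_s Y⟩ − c(λ, Y) = 0 for all Y ∈ S. Then, writing F_j = G_s X_j for j ∈ {−, 0, +}, one has (ρ_f/(4Δt)) Ψ(u₊, u₀, u₋) + ν‖G u₊‖² + (δρ/(4Δt)) Ψ(Ẋ₊,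 Ẋ₀, Ẋ₋) + (κ/(4Δt)) Ψ(F₊, F₀, F₋) ≤ 0. -/
open scoped RealInnerProductSpace

/-- `Ψ(a, b, c) = ‖a‖² + ‖2a − b‖² − ‖b‖² − ‖2b − c‖² + ‖a − 2b + c‖²`. -/
noncomputable def Psi {E : Type*} [NormedAddCommGroup E] [InnerProductSpace ℝ E]
    (a b c : E) : ℝ :=
  ‖a‖ ^ 2 + ‖(2 : ℝ) • a - b‖ ^ 2 - ‖b‖ ^ 2 - ‖(2 : ℝ) • b - c‖ ^ 2 + ‖a - (2 : ℝ) • b + c‖ ^ 2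


lemma psi_eq {E : Type*} [NormedAddCommGroup E] [InnerProductSpace ℝ E]
    (a b c : E) : Psi a b c = 2 * ⟪(3 : ℝ) • a - (4 : ℝ) • b + c, a⟫ := by
  simp only [Psi, ← real_inner_self_eq_norm_sq, inner_sub_left, inner_sub_right,
    inner_add_left, inner_add_right, real_inner_smul_left, real_inner_smul_right,
    real_inner_comm b a, real_inner_comm c a, real_inner_comm c b]
  ring

theorem bdf2_per_step_stability
    {V Q S M N Λ : Type*}
    [NormedAddCommGroup V] [InnerProductSpace ℝ V]
    [NormedAddCommGroup Q] [InnerProductSpace ℝ Q]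
    [NormedAddCommGroup S] [InnerProductSpace ℝ S]
    [NormedAddCommGroup M] [InnerProductSpace ℝ M]
    [NormedAddCommGroup N] [InnerProductSpace ℝ N]
    [NormedAddCommGroup Λ] [InnerProductSpace ℝ Λ]
    (G : V →ₗ[ℝ] M) (d : V →ₗ[ℝ] Q) (Gs : S →ₗ[ℝ] N)
    (c : Λ →ₗ[ℝ] S →ₗ[ℝ] ℝ) (b : V →ₗ[ℝ] V →ₗ[ℝ] V →ₗ[ℝ] ℝ)
    (hb : ∀ v w : V, b v w w = 0)
    (ρf δρ ν κ Δt : ℝ)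
    (hρf : 0 ≤ ρf) (hδρ : 0 ≤ δρ) (hν : 0 ≤ ν) (hκ : 0 ≤ κ) (hΔt : 0 < Δt)
    (um u₀ up : V) (p : Q) (Xm X₀ Xp dXm dX₀ dXp : S) (lam : Λ) (w : S)
    (h1 : ρf * ⟪(2 * Δt)⁻¹ • ((3 : ℝ) • up - (4 : ℝ) • u₀ + um), up⟫
        + b up up up + ν * ‖G up‖ ^ 2 - ⟪d up, p⟫ + c lam w = 0)
    (h2 : ∀ q : Q, ⟪d up, q⟫ = 0)
    (h3 : ∀ μ : Λ, c μ (w - (2 * Δt)⁻¹ • ((3 : ℝ) • Xp - (4 : ℝ) • X₀ + Xm)) = 0)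
    (h4 : dXp = (2 * Δt)⁻¹ • ((3 : ℝ) • Xp - (4 : ℝ) • X₀ + Xm))
    (h5 : ∀ Y : S, δρ * ⟪(2 * Δt)⁻¹ • ((3 : ℝ) • dXp - (4 : ℝ) • dX₀ + dXm), Y⟫
        + κ * ⟪Gs Xp, Gs Y⟫ - c lam Y = 0) :
    (ρf / (4 * Δt)) * Psi up u₀ um + ν * ‖G up‖ ^ 2
      + (δρ / (4 * Δt)) * Psi dXp dX₀ dXm
      + (κ / (4 * Δt)) * Psi (Gs Xp) (Gs X₀) (Gs Xm) ≤ 0 := by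
  have e1 : ρf * ((2 * Δt)⁻¹ * ⟪(3 : ℝ) • up - (4 : ℝ) • u₀ + um, up⟫)
      + ν * ‖G up‖ ^ 2 + c lam w = 0 := by
    have h := h1
    rw [hb, h2 p, real_inner_smul_left] at h
    linarith
  have hc : c lam w = c lam dXp := by
    have h := h3 lam
    rw [map_sub, sub_eq_zero] at h
    rw [h4]; exact h
  have hGs : Gs dXp = (2 * Δt)⁻¹ • ((3 : ℝ) • Gs Xp - (4 : ℝ) • Gs X₀ + Gs Xm) := by
    rw [h4]; simp [map_smul, map_sub, map_add]
  have e5 : δρ * ((2 * Δt)⁻¹ * ⟪(3 : ℝ) • dXp - (4 : ℝ) • dX₀ + dXm, dXp⟫)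
      + κ * ((2 * Δt)⁻¹ * ⟪(3 : ℝ) • Gs Xp - (4 : ℝ) • Gs X₀ + Gs Xm, Gs Xp⟫)
      - c lam dXp = 0 := by
    have h := h5 dXp
    rw [hGs, real_inner_smul_left, real_inner_smul_right] at h
    linear_combination h + κ * (2 * Δt)⁻¹ *
      real_inner_comm (Gs Xp) ((3 : ℝ) • Gs Xp - (4 : ℝ) • Gs X₀ + Gs Xm)
  have hΔ : Δt ≠ 0 := ne_of_gt hΔt
  have key : (ρf / (4 * Δt)) * Psi up u₀ um + ν * ‖G up‖ ^ 2
      + (δρ / (4 * Δt)) * Psi dXp dX₀ dXm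
      + (κ / (4 * Δt)) * Psi (Gs Xp) (Gs X₀) (Gs Xm) = 0 := by
    rw [psi_eq, psi_eq, psi_eq]
    linear_combination e1 + e5 - hc
  exact key.le
end

section
/- Unconditional stability bound for the BDF2 scheme for a linear material law (summed estimate (3.6)/eq:matrix, abstract form). Let m ≥ 2 and assume given sequences u : ℕ → V, p : ℕ → Q, X, Ẋ : ℕ → S, λ : ℕ → Λ and w : ℕ → S such that for every n with 1 ≤ n ≤ m − 1: (i) ρ_f ⟨(3u(n+1) − 4u(n) + u(n−1))/(2Δt), u(n+1)⟩ + b(u(n+1), u(n+1), u(n+1)) + ν‖G u(n+1)‖² − ⟨d u(n+1), p(n+1)⟩ + c(λ(n+1), w(n+1)) = 0; (ii) ⟨d u(n+1), q⟩ = 0 for all q ∈ Q; (iii) c(μ, w(n+1) − (3X(n+1) − 4X(n) + X(n−1))/(2Δt)) = 0 for all μ ∈ Λ; (iv) Ẋ(n+1) = (3X(n+1) − 4X(n) + X(n−1))/(2Δt); (v) δρ ⟨(3Ẋ(n+1) − 4Ẋ(n) + Ẋ(n−1))/(2Δt), Y⟩ + κ⟨G_s X(n+1), G_s Y⟩ −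 c(λ(n+1), Y) = 0 for all Y ∈ S. Then, writing F(n) = G_s X(n), one has ρ_f(‖u(m)‖² + ‖2u(m) − u(m−1)‖²) + 4Δt ν Σ_{n=2}^{m} ‖G u(n)‖² + δρ(‖Ẋ(m)‖² + ‖2Ẋ(m) − Ẋ(m−1)‖²) + κ(‖F(m)‖² + ‖2F(m) − F(m−1)‖²) ≤ ρ_f(‖u(1)‖² + ‖2u(1) − u(0)‖²) + δρ(‖Ẋ(1)‖² + ‖2Ẋ(1) − Ẋ(0)‖²) + κ(‖F(1)‖² + ‖2F(1) − F(0)‖²). -/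
open scoped RealInnerProductSpace
open Finset

lemma bdf2_id {E : Type*} [NormedAddCommGroup E] [InnerProductSpace ℝ E] (a b c : E) :
    2 * ⟪(3:ℝ)•a - (4:ℝ)•b + c, a⟫
      = (‖a‖^2 + ‖(2:ℝ)•a - b‖^2) - (‖b‖^2 + ‖(2:ℝ)•b - c‖^2) + ‖a - (2:ℝ)•b + c‖^2 := by
  simp only [← real_inner_self_eq_norm_sq, inner_sub_left, inner_add_left, inner_sub_right,
    inner_add_right, real_inner_smul_left, real_inner_smul_right]
  linarith [real_inner_comm a b, real_inner_comm a c, real_inner_comm b c]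

theorem bdf2_summed_stability
    {V Q S M N Λ : Type*}
    [NormedAddCommGroup V] [InnerProductSpace ℝ V]
    [NormedAddCommGroup Q] [InnerProductSpace ℝ Q]
    [NormedAddCommGroup S] [InnerProductSpace ℝ S]
    [NormedAddCommGroup M] [InnerProductSpace ℝ M]
    [NormedAddCommGroup N] [InnerProductSpace ℝ N]
    [NormedAddCommGroup Λ] [InnerProductSpace ℝ Λ]
    (G : V →ₗ[ℝ] M) (d : V →ₗ[ℝ] Q) (Gs : S →ₗ[ℝ] N)
    (c : Λ →ₗ[ℝ] S →ₗ[ℝ] ℝ) (b : V →ₗ[ℝ] V →ₗ[ℝ] V →ₗ[ℝ] ℝ)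
    (hb : ∀ v w : V, b v w w = 0)
    (ρf δρ ν κ Δt : ℝ)
    (hρf : 0 ≤ ρf) (hδρ : 0 ≤ δρ) (hν : 0 ≤ ν) (hκ : 0 ≤ κ) (hΔt : 0 < Δt)
    (m : ℕ) (hm : 2 ≤ m)
    (u : ℕ → V) (p : ℕ → Q) (X dX : ℕ → S) (lam : ℕ → Λ) (w : ℕ → S)
    (h1 : ∀ n, 1 ≤ n → n ≤ m - 1 →
      ρf * ⟪(2 * Δt)⁻¹ • ((3 : ℝ) • u (n + 1) - (4 : ℝ) • u n + u (n - 1)), u (n + 1)⟫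
        + b (u (n + 1)) (u (n + 1)) (u (n + 1)) + ν * ‖G (u (n + 1))‖ ^ 2
        - ⟪d (u (n + 1)), p (n + 1)⟫ + c (lam (n + 1)) (w (n + 1)) = 0)
    (h2 : ∀ n, 1 ≤ n → n ≤ m - 1 → ∀ q : Q, ⟪d (u (n + 1)), q⟫ = 0)
    (h3 : ∀ n, 1 ≤ n → n ≤ m - 1 → ∀ μ : Λ,
      c μ (w (n + 1) - (2 * Δt)⁻¹ • ((3 : ℝ) • X (n + 1) - (4 : ℝ) • X n + X (n - 1))) = 0)
    (h4 : ∀ n, 1 ≤ n → n ≤ m - 1 →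
      dX (n + 1) = (2 * Δt)⁻¹ • ((3 : ℝ) • X (n + 1) - (4 : ℝ) • X n + X (n - 1)))
    (h5 : ∀ n, 1 ≤ n → n ≤ m - 1 → ∀ Y : S,
      δρ * ⟪(2 * Δt)⁻¹ • ((3 : ℝ) • dX (n + 1) - (4 : ℝ) • dX n + dX (n - 1)), Y⟫
        + κ * ⟪Gs (X (n + 1)), Gs Y⟫ - c (lam (n + 1)) Y = 0) :
    ρf * (‖u m‖ ^ 2 + ‖(2 : ℝ) • u m - u (m - 1)‖ ^ 2)
      + 4 * Δt * ν * ∑ n ∈ Finset.Icc 2 m, ‖G (u n)‖ ^ 2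
      + δρ * (‖dX m‖ ^ 2 + ‖(2 : ℝ) • dX m - dX (m - 1)‖ ^ 2)
      + κ * (‖Gs (X m)‖ ^ 2 + ‖(2 : ℝ) • Gs (X m) - Gs (X (m - 1))‖ ^ 2)
      ≤ ρf * (‖u 1‖ ^ 2 + ‖(2 : ℝ) • u 1 - u 0‖ ^ 2)
        + δρ * (‖dX 1‖ ^ 2 + ‖(2 : ℝ) • dX 1 - dX 0‖ ^ 2)
        + κ * (‖Gs (X 1)‖ ^ 2 + ‖(2 : ℝ) • Gs (X 1) - Gs (X 0)‖ ^ 2) := by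
  have key : ∀ n, 1 ≤ n → n ≤ m - 1 →
      ρf * (‖u (n+1)‖ ^ 2 + ‖(2:ℝ) • u (n+1) - u n‖ ^ 2)
        + 4 * Δt * ν * ‖G (u (n+1))‖ ^ 2
        + δρ * (‖dX (n+1)‖ ^ 2 + ‖(2:ℝ) • dX (n+1) - dX n‖ ^ 2)
        + κ * (‖Gs (X (n+1))‖ ^ 2 + ‖(2:ℝ) • Gs (X (n+1)) - Gs (X n)‖ ^ 2)
      ≤ ρf * (‖u n‖ ^ 2 + ‖(2:ℝ) • u n - u (n-1)‖ ^ 2)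
        + δρ * (‖dX n‖ ^ 2 + ‖(2:ℝ) • dX n - dX (n-1)‖ ^ 2)
        + κ * (‖Gs (X n)‖ ^ 2 + ‖(2:ℝ) • Gs (X n) - Gs (X (n-1))‖ ^ 2) := by
    intro n hn hn'
    have e1 := h1 n hn hn'
    rw [hb, h2 n hn hn' (p (n+1))] at e1
    have e3 := h3 n hn hn' (lam (n+1))
    have e4 := h4 n hn hn'
    rw [map_sub, ← e4] at e3
    have e5 := h5 n hn hn' (dX (n+1))
    have hGsdX : Gs (dX (n+1))
        = (2 * Δt)⁻¹ • ((3:ℝ) • Gs (X (n+1)) - (4:ℝ) • Gs (X n) + Gs (X (n-1))) := by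
      rw [e4]; simp [map_smul, map_sub, map_add]
    rw [hGsdX, real_inner_smul_right] at e5
    rw [real_inner_smul_left] at e1 e5
    have hcomm := real_inner_comm (Gs (X (n+1)))
      ((3:ℝ) • Gs (X (n+1)) - (4:ℝ) • Gs (X n) + Gs (X (n-1)))
    have hinv : (2 * Δt) * (2 * Δt)⁻¹ = 1 := mul_inv_cancel₀ (by positivity)
    have comb2 : 2 * ρf * ⟪(3:ℝ) • u (n+1) - (4:ℝ) • u n + u (n-1), u (n+1)⟫
        + 4 * Δt * ν * ‖G (u (n+1))‖ ^ 2
        + 2 * δρ * ⟪(3:ℝ) • dX (n+1) - (4:ℝ) • dX n + dX (n-1), dX (n+1)⟫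
        + 2 * κ * ⟪(3:ℝ) • Gs (X (n+1)) - (4:ℝ) • Gs (X n) + Gs (X (n-1)), Gs (X (n+1))⟫
        = 0 := by
      linear_combination (4*Δt) * e1 - (4*Δt) * e3 + (4*Δt) * e5 + (2*κ) * hcomm
        - (2 * (ρf * ⟪(3:ℝ) • u (n+1) - (4:ℝ) • u n + u (n-1), u (n+1)⟫
             + δρ * ⟪(3:ℝ) • dX (n+1) - (4:ℝ) • dX n + dX (n-1), dX (n+1)⟫
             + κ * ⟪Gs (X (n+1)), (3:ℝ) • Gs (X (n+1)) - (4:ℝ) • Gs (X n) + Gs (X (n-1))⟫))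
          * hinv
    have idu : ρf * (2 * ⟪(3:ℝ) • u (n+1) - (4:ℝ) • u n + u (n-1), u (n+1)⟫)
        = ρf * ((‖u (n+1)‖^2 + ‖(2:ℝ) • u (n+1) - u n‖^2)
            - (‖u n‖^2 + ‖(2:ℝ) • u n - u (n-1)‖^2)
            + ‖u (n+1) - (2:ℝ) • u n + u (n-1)‖^2) := by
      rw [bdf2_id]
    have idd : δρ * (2 * ⟪(3:ℝ) • dX (n+1) - (4:ℝ) • dX n + dX (n-1), dX (n+1)⟫)
        = δρ * ((‖dX (n+1)‖^2 + ‖(2:ℝ) • dX (n+1) - dX n‖^2)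
            - (‖dX n‖^2 + ‖(2:ℝ) • dX n - dX (n-1)‖^2)
            + ‖dX (n+1) - (2:ℝ) • dX n + dX (n-1)‖^2) := by
      rw [bdf2_id]
    have idF : κ * (2 * ⟪(3:ℝ) • Gs (X (n+1)) - (4:ℝ) • Gs (X n) + Gs (X (n-1)), Gs (X (n+1))⟫)
        = κ * ((‖Gs (X (n+1))‖^2 + ‖(2:ℝ) • Gs (X (n+1)) - Gs (X n)‖^2)
            - (‖Gs (X n)‖^2 + ‖(2:ℝ) • Gs (X n) - Gs (X (n-1))‖^2)
            + ‖Gs (X (n+1)) - (2:ℝ) • Gs (X n) + Gs (X (n-1))‖^2) := by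
      rw [bdf2_id]
    have pu : 0 ≤ ρf * ‖u (n+1) - (2:ℝ) • u n + u (n-1)‖^2 := by positivity
    have pd : 0 ≤ δρ * ‖dX (n+1) - (2:ℝ) • dX n + dX (n-1)‖^2 := by positivity
    have pF : 0 ≤ κ * ‖Gs (X (n+1)) - (2:ℝ) • Gs (X n) + Gs (X (n-1))‖^2 := by positivity
    linarith [comb2, idu, idd, idF, pu, pd, pF]
  have main : ∀ k, 1 ≤ k → k ≤ m →
      ρf * (‖u k‖ ^ 2 + ‖(2:ℝ) • u k - u (k-1)‖ ^ 2)
        + 4 * Δt * ν * ∑ n ∈ Finset.Icc 2 k, ‖G (u n)‖ ^ 2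
        + δρ * (‖dX k‖ ^ 2 + ‖(2:ℝ) • dX k - dX (k-1)‖ ^ 2)
        + κ * (‖Gs (X k)‖ ^ 2 + ‖(2:ℝ) • Gs (X k) - Gs (X (k-1))‖ ^ 2)
      ≤ ρf * (‖u 1‖ ^ 2 + ‖(2:ℝ) • u 1 - u 0‖ ^ 2)
        + δρ * (‖dX 1‖ ^ 2 + ‖(2:ℝ) • dX 1 - dX 0‖ ^ 2)
        + κ * (‖Gs (X 1)‖ ^ 2 + ‖(2:ℝ) • Gs (X 1) - Gs (X 0)‖ ^ 2) := by
    intro k hk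
    induction k, hk using Nat.le_induction with
    | base =>
      intro _
      simp
    | succ n hn ih =>
      intro hle
      have hn' : n ≤ m - 1 := by omega
      have hstep := key n hn hn'
      have ihn := ih (by omega)
      have hsum : ∑ j ∈ Finset.Icc 2 (n+1), ‖G (u j)‖ ^ 2
          = (∑ j ∈ Finset.Icc 2 n, ‖G (u j)‖ ^ 2) + ‖G (u (n+1))‖ ^ 2 := by
        rw [Finset.sum_Icc_succ_top (by omega)]
      have hν' : 0 ≤ 4 * Δt * ν := by positivity
      simp only [Nat.add_sub_cancel, hsum]
      linarith [hstep, ihn, hν']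
  exact main m (by omega) le_rfl
end

section
/- Per-step unconditional stability of the Crank–Nicolson midpoint scheme (Proposition 3.3, abstract form). Assume given u₀, u₁ ∈ V, p ∈ Q, X₀, X₁, Ẋ₀, Ẋ₁ ∈ S, λ ∈ Λ and w ∈ S, and write m = (u₁ + u₀)/2 and F_j = G_s X_j for j ∈ {0, 1}. Assume: (i) ρ_f ⟨(u₁ − u₀)/Δt, m⟩ + b(m, m, m) + ν‖G m‖² − ⟨d m, p⟩ + c(λ, w) = 0; (ii) ⟨d u₀, q⟩ = 0 and ⟨d u₁, q⟩ = 0 for all q ∈ Q; (iii) (Ẋ₁ + Ẋ₀)/2 = (X₁ − X₀)/Δt; (iv) δρ ⟨(Ẋ₁ − Ẋ₀)/Δt, Y⟩ + ⟨P(F₁), G_s Y⟩ − c(λ, Y) = 0 for all Y ∈ S; (v) c(μ, w − (X₁ − X₀)/Δt) = 0 for all μ ∈ Λ. Then (ρ_f/(2Δt))(‖u₁‖² − ‖u₀‖²) + (ν/4)‖G u₁ + G u₀‖² + (δρ/(2Δt))(‖Ẋ₁‖² − ‖Ẋ₀‖²) + (W(F₁) − W(F₀))/Δt ≤ 0. 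-/
open Filter Topology
open scoped RealInnerProductSpace

lemma convex_grad_ineq {N : Type*} [NormedAddCommGroup N] [NormedSpace ℝ N]
    (W : N → ℝ) (hW : ConvexOn ℝ Set.univ W)
    (F₁ F₀ : N) (D : N →L[ℝ] ℝ) (hD : HasFDerivAt W D F₁) :
    D (F₀ - F₁) ≤ W F₀ - W F₁ := by
  set g : ℝ → ℝ := fun t => W (F₁ + t • (F₀ - F₁)) with hg
  have hline : HasDerivAt (fun t : ℝ => F₁ + t • (F₀ - F₁)) (F₀ - F₁) 0 := by
    simpa using ((hasDerivAt_id (0:ℝ)).smul_const (F₀ - F₁)).const_add F₁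
  have hgd : HasDerivAt g (D (F₀ - F₁)) 0 := by
    have hD' : HasFDerivAt W D (F₁ + (0:ℝ) • (F₀ - F₁)) := by simpa using hD
    exact hD'.comp_hasDerivAt (0:ℝ) hline
  have htend : Tendsto (slope g 0) (𝓝[>] 0) (𝓝 (D (F₀ - F₁))) :=
    (hasDerivAt_iff_tendsto_slope.1 hgd).mono_left
      (nhdsWithin_mono 0 fun t ht => ne_of_gt ht)
  refine le_of_tendsto htend ?_
  filter_upwards [Ioc_mem_nhdsGT_of_mem (Set.left_mem_Ico.2 one_pos)] with t ht
  obtain ⟨ht0, ht1⟩ := ht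
  have hconv := hW.2 (Set.mem_univ F₁) (Set.mem_univ F₀)
    (show (0:ℝ) ≤ 1 - t by linarith) (show (0:ℝ) ≤ t from ht0.le)
    (show (1 - t) + t = 1 by ring)
  have hgt : g t ≤ (1 - t) * W F₁ + t * W F₀ := by
    have h : F₁ + t • (F₀ - F₁) = (1 - t) • F₁ + t • F₀ := by
      simp [smul_sub, sub_smul]; abel
    simpa [g, h, smul_eq_mul] using hconv
  have hg0 : g 0 = W F₁ := by simp [g]
  rw [slope_def_field, div_le_iff₀ (by linarith : (0:ℝ) < t - 0)]
  nlinarith [hgt, hg0]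

theorem crank_nicolson_midpoint_per_step_stability
    {V Q S M N Λ : Type*}
    [NormedAddCommGroup V] [InnerProductSpace ℝ V]
    [NormedAddCommGroup Q] [InnerProductSpace ℝ Q]
    [NormedAddCommGroup S] [InnerProductSpace ℝ S]
    [NormedAddCommGroup M] [InnerProductSpace ℝ M]
    [NormedAddCommGroup N] [InnerProductSpace ℝ N]
    [NormedAddCommGroup Λ] [InnerProductSpace ℝ Λ]
    (G : V →ₗ[ℝ] M) (d : V →ₗ[ℝ] Q) (Gs : S →ₗ[ℝ] N)
    (c : Λ →ₗ[ℝ] S →ₗ[ℝ] ℝ) (b : V →ₗ[ℝ] V →ₗ[ℝ] V →ₗ[ℝ] ℝ)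
    (hb : ∀ v w : V, b v w w = 0)
    (ρf δρ ν Δt : ℝ)
    (hρf : 0 ≤ ρf) (hδρ : 0 ≤ δρ) (hν : 0 ≤ ν) (hΔt : 0 < Δt)
    (W : N → ℝ) (hW : ConvexOn ℝ Set.univ W)
    (DW : N → N →L[ℝ] ℝ) (hDW : ∀ F : N, HasFDerivAt W (DW F) F)
    (P : N → N) (hP : ∀ F H : N, ⟪P F, H⟫ = DW F H)
    (u₀ u₁ : V) (p : Q) (X₀ X₁ dX₀ dX₁ : S) (lam : Λ) (w : S)
    (h1 : ρf * ⟪Δt⁻¹ • (u₁ - u₀), (2 : ℝ)⁻¹ • (u₁ + u₀)⟫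
        + b ((2 : ℝ)⁻¹ • (u₁ + u₀)) ((2 : ℝ)⁻¹ • (u₁ + u₀)) ((2 : ℝ)⁻¹ • (u₁ + u₀))
        + ν * ‖G ((2 : ℝ)⁻¹ • (u₁ + u₀))‖ ^ 2
        - ⟪d ((2 : ℝ)⁻¹ • (u₁ + u₀)), p⟫ + c lam w = 0)
    (h2₀ : ∀ q : Q, ⟪d u₀, q⟫ = 0) (h2₁ : ∀ q : Q, ⟪d u₁, q⟫ = 0)
    (h3 : (2 : ℝ)⁻¹ • (dX₁ + dX₀) = Δt⁻¹ • (X₁ - X₀))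
    (h4 : ∀ Y : S, δρ * ⟪Δt⁻¹ • (dX₁ - dX₀), Y⟫ + ⟪P (Gs X₁), Gs Y⟫ - c lam Y = 0)
    (h5 : ∀ μ : Λ, c μ (w - Δt⁻¹ • (X₁ - X₀)) = 0) :
    (ρf / (2 * Δt)) * (‖u₁‖ ^ 2 - ‖u₀‖ ^ 2)
      + (ν / 4) * ‖G u₁ + G u₀‖ ^ 2
      + (δρ / (2 * Δt)) * (‖dX₁‖ ^ 2 - ‖dX₀‖ ^ 2)
      + (W (Gs X₁) - W (Gs X₀)) / Δt ≤ 0 := by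
  have hΔt' : Δt ≠ 0 := ne_of_gt hΔt
  -- simplify h1
  have hbm := hb ((2 : ℝ)⁻¹ • (u₁ + u₀)) ((2 : ℝ)⁻¹ • (u₁ + u₀))
  have hdp : ⟪d ((2 : ℝ)⁻¹ • (u₁ + u₀)), p⟫ = 0 := by
    rw [map_smul, map_add]
    simp [real_inner_smul_left, inner_add_left, h2₀ p, h2₁ p]
  have hflu : ⟪Δt⁻¹ • (u₁ - u₀), (2 : ℝ)⁻¹ • (u₁ + u₀)⟫
      = (‖u₁‖ ^ 2 - ‖u₀‖ ^ 2) / (2 * Δt) := by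
    rw [real_inner_smul_left, real_inner_smul_right, inner_sub_left, inner_add_right,
      inner_add_right, real_inner_self_eq_norm_sq, real_inner_self_eq_norm_sq,
      real_inner_comm u₀ u₁]
    field_simp; ring
  have hGm : ‖G ((2 : ℝ)⁻¹ • (u₁ + u₀))‖ ^ 2 = (4 : ℝ)⁻¹ * ‖G u₁ + G u₀‖ ^ 2 := by
    rw [map_smul, map_add, norm_smul]
    rw [mul_pow]
    norm_num
  have E1 : ρf * ((‖u₁‖ ^ 2 - ‖u₀‖ ^ 2) / (2 * Δt))
      + ν * ((4 : ℝ)⁻¹ * ‖G u₁ + G u₀‖ ^ 2) + c lam w = 0 := by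
    rw [← hflu, ← hGm]
    linarith [h1, hbm, hdp]
  -- simplify h4 at Y := Δt⁻¹ • (X₁ - X₀)
  have hcw : c lam (Δt⁻¹ • (X₁ - X₀)) = c lam w := by
    have := h5 lam
    rw [map_sub] at this
    linarith
  have hfls : ⟪Δt⁻¹ • (dX₁ - dX₀), (2 : ℝ)⁻¹ • (dX₁ + dX₀)⟫
      = (‖dX₁‖ ^ 2 - ‖dX₀‖ ^ 2) / (2 * Δt) := by
    rw [real_inner_smul_left, real_inner_smul_right, inner_sub_left, inner_add_right,
      inner_add_right, real_inner_self_eq_norm_sq, real_inner_self_eq_norm_sq,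
      real_inner_comm dX₀ dX₁]
    field_simp; ring
  have hPterm : ⟪P (Gs X₁), Gs (Δt⁻¹ • (X₁ - X₀))⟫
      = Δt⁻¹ * ⟪P (Gs X₁), Gs X₁ - Gs X₀⟫ := by
    rw [map_smul, real_inner_smul_right, map_sub]
  have hfls' : ⟪Δt⁻¹ • (dX₁ - dX₀), Δt⁻¹ • (X₁ - X₀)⟫
      = (‖dX₁‖ ^ 2 - ‖dX₀‖ ^ 2) / (2 * Δt) := by rw [← h3]; exact hfls
  have E2 : δρ * ((‖dX₁‖ ^ 2 - ‖dX₀‖ ^ 2) / (2 * Δt))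
      + Δt⁻¹ * ⟪P (Gs X₁), Gs X₁ - Gs X₀⟫ - c lam w = 0 := by
    have h4' := h4 (Δt⁻¹ • (X₁ - X₀))
    rw [hfls', hPterm, hcw] at h4'
    exact h4'
  -- convexity
  have hconv : W (Gs X₁) - W (Gs X₀) ≤ ⟪P (Gs X₁), Gs X₁ - Gs X₀⟫ := by
    have h := convex_grad_ineq W hW (Gs X₁) (Gs X₀) (DW (Gs X₁)) (hDW (Gs X₁))
    rw [← hP] at h
    have : ⟪P (Gs X₁), Gs X₁ - Gs X₀⟫ = -⟪P (Gs X₁), Gs X₀ - Gs X₁⟫ := by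
      rw [← inner_neg_right, neg_sub]
    linarith [h, this]
  have hconv' : (W (Gs X₁) - W (Gs X₀)) / Δt ≤ Δt⁻¹ * ⟪P (Gs X₁), Gs X₁ - Gs X₀⟫ := by
    rw [div_eq_inv_mul]
    exact mul_le_mul_of_nonneg_left hconv (by positivity)
  have hdiv : (ν / 4) * ‖G u₁ + G u₀‖ ^ 2 = ν * ((4 : ℝ)⁻¹ * ‖G u₁ + G u₀‖ ^ 2) := by ring
  have hρ1 : (ρf / (2 * Δt)) * (‖u₁‖ ^ 2 - ‖u₀‖ ^ 2)
      = ρf * ((‖u₁‖ ^ 2 - ‖u₀‖ ^ 2) / (2 * Δt)) := by ring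
  have hρ2 : (δρ / (2 * Δt)) * (‖dX₁‖ ^ 2 - ‖dX₀‖ ^ 2)
      = δρ * ((‖dX₁‖ ^ 2 - ‖dX₀‖ ^ 2) / (2 * Δt)) := by ring
  rw [hdiv, hρ1, hρ2]
  linarith [E1, E2, hconv']
end

section
/- Unconditional stability bound for the Crank–Nicolson midpoint scheme (summed estimate, abstract form). Let m ≥ 1 and assume given sequences u : ℕ → V, p : ℕ → Q, X, Ẋ : ℕ → S, λ : ℕ → Λ and w : ℕ → S such that for every n with 0 ≤ n ≤ m − 1, writing m_n = (u(n+1) + u(n))/2 and F(j) = G_s X(j): (i) ρ_f ⟨(u(n+1) − u(n))/Δt, m_n⟩ + b(m_n, m_n, m_n) + ν‖G m_n‖² − ⟨d m_n, p(n+1)⟩ + c(λ(n+1), w(n+1)) = 0; (ii) ⟨d u(n), q⟩ = 0 and ⟨d u(n+1), q⟩ = 0 for all q ∈ Q; (iii) (Ẋ(n+1) + Ẋ(n))/2 = (X(n+1) − X(n))/Δt; (iv) δρ ⟨(Ẋ(n+1) − Ẋ(n))/Δt, Y⟩ + ⟨P(F(n+1)), G_s Y⟩ − c(λ(n+1), Y)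 = 0 for all Y ∈ S; (v) c(μ, w(n+1) − (X(n+1) − X(n))/Δt) = 0 for all μ ∈ Λ. Then (ρ_f/(2Δt))‖u(m)‖² + (ν/4) Σ_{n=1}^{m} ‖G u(n) + G u(n−1)‖² + (δρ/(2Δt))‖Ẋ(m)‖² + W(G_s X(m))/Δt ≤ (ρ_f/(2Δt))‖u(0)‖² + (δρ/(2Δt))‖Ẋ(0)‖² + W(G_s X(0))/Δt. -/
open scoped RealInnerProductSpace
open Finset

lemma cn_grad_ineq {N : Type*} [NormedAddCommGroup N] [NormedSpace ℝ N]
    (W : N → ℝ) (hW : ConvexOn ℝ Set.univ W)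
    (DW : N → N →L[ℝ] ℝ) (hDW : ∀ F : N, HasFDerivAt W (DW F) F)
    (x y : N) : DW x (y - x) ≤ W y - W x := by
  have hline : HasDerivAt (fun t : ℝ => (AffineMap.lineMap x y) t) (y - x) 0 := by
    have h : (fun t : ℝ => (AffineMap.lineMap x y) t) = fun t : ℝ => t • (y - x) + x := by
      funext t; simp [AffineMap.lineMap_apply_module]; module
    rw [h]
    simpa using ((hasDerivAt_id (0:ℝ)).smul_const (y - x)).add_const x
  have hg : HasDerivAt (W ∘ fun t : ℝ => (AffineMap.lineMap x y) t) (DW x (y - x)) 0 := by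
    have h0 : (AffineMap.lineMap x y) (0:ℝ) = x := AffineMap.lineMap_apply_zero x y
    have h := (hDW ((AffineMap.lineMap x y) (0:ℝ))).comp_hasDerivAt 0 hline
    rw [h0] at h; exact h
  have hconv : ConvexOn ℝ Set.univ (W ∘ fun t : ℝ => (AffineMap.lineMap x y) t) := by
    have := hW.comp_affineMap (AffineMap.lineMap x y)
    simpa [Function.comp_def] using this
  have := hconv.le_slope_of_hasDerivAt (Set.mem_univ (0:ℝ)) (Set.mem_univ (1:ℝ)) zero_lt_one hg
  simpa [slope_def_field, Function.comp] using this

lemma cn_inner_avg {V : Type*} [NormedAddCommGroup V] [InnerProductSpace ℝ V]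
    (s : ℝ) (a b : V) :
    ⟪s • (a - b), (2 : ℝ)⁻¹ • (a + b)⟫ = s * 2⁻¹ * (‖a‖ ^ 2 - ‖b‖ ^ 2) := by
  rw [real_inner_smul_left, real_inner_smul_right, inner_sub_left, inner_add_right,
    inner_add_right, real_inner_comm b a, real_inner_self_eq_norm_sq,
    real_inner_self_eq_norm_sq]
  ring

theorem crank_nicolson_midpoint_summed_stability
    {V Q S M N Λ : Type*}
    [NormedAddCommGroup V] [InnerProductSpace ℝ V]
    [NormedAddCommGroup Q] [InnerProductSpace ℝ Q]
    [NormedAddCommGroup S] [InnerProductSpace ℝ S]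
    [NormedAddCommGroup M] [InnerProductSpace ℝ M]
    [NormedAddCommGroup N] [InnerProductSpace ℝ N]
    [NormedAddCommGroup Λ] [InnerProductSpace ℝ Λ]
    (G : V →ₗ[ℝ] M) (d : V →ₗ[ℝ] Q) (Gs : S →ₗ[ℝ] N)
    (c : Λ →ₗ[ℝ] S →ₗ[ℝ] ℝ) (b : V →ₗ[ℝ] V →ₗ[ℝ] V →ₗ[ℝ] ℝ)
    (hb : ∀ v w : V, b v w w = 0)
    (ρf δρ ν Δt : ℝ)
    (hρf : 0 ≤ ρf) (hδρ : 0 ≤ δρ) (hν : 0 ≤ ν) (hΔt : 0 < Δt)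
    (W : N → ℝ) (hW : ConvexOn ℝ Set.univ W)
    (DW : N → N →L[ℝ] ℝ) (hDW : ∀ F : N, HasFDerivAt W (DW F) F)
    (P : N → N) (hP : ∀ F H : N, ⟪P F, H⟫ = DW F H)
    (m : ℕ) (hm : 1 ≤ m)
    (u : ℕ → V) (p : ℕ → Q) (X dX : ℕ → S) (lam : ℕ → Λ) (w : ℕ → S)
    (h1 : ∀ n, n ≤ m - 1 →
      ρf * ⟪Δt⁻¹ • (u (n + 1) - u n), (2 : ℝ)⁻¹ • (u (n + 1) + u n)⟫
        + b ((2 : ℝ)⁻¹ • (u (n + 1) + u n)) ((2 : ℝ)⁻¹ • (u (n + 1) + u n))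
            ((2 : ℝ)⁻¹ • (u (n + 1) + u n))
        + ν * ‖G ((2 : ℝ)⁻¹ • (u (n + 1) + u n))‖ ^ 2
        - ⟪d ((2 : ℝ)⁻¹ • (u (n + 1) + u n)), p (n + 1)⟫
        + c (lam (n + 1)) (w (n + 1)) = 0)
    (h2 : ∀ n, n ≤ m - 1 → ∀ q : Q, ⟪d (u n), q⟫ = 0 ∧ ⟪d (u (n + 1)), q⟫ = 0)
    (h3 : ∀ n, n ≤ m - 1 → (2 : ℝ)⁻¹ • (dX (n + 1) + dX n) = Δt⁻¹ • (X (n + 1) - X n))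
    (h4 : ∀ n, n ≤ m - 1 → ∀ Y : S,
      δρ * ⟪Δt⁻¹ • (dX (n + 1) - dX n), Y⟫ + ⟪P (Gs (X (n + 1))), Gs Y⟫
        - c (lam (n + 1)) Y = 0)
    (h5 : ∀ n, n ≤ m - 1 → ∀ μ : Λ, c μ (w (n + 1) - Δt⁻¹ • (X (n + 1) - X n)) = 0) :
    (ρf / (2 * Δt)) * ‖u m‖ ^ 2
      + (ν / 4) * ∑ n ∈ Finset.Icc 1 m, ‖G (u n) + G (u (n - 1))‖ ^ 2
      + (δρ / (2 * Δt)) * ‖dX m‖ ^ 2 + W (Gs (X m)) / Δt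
      ≤ (ρf / (2 * Δt)) * ‖u 0‖ ^ 2 + (δρ / (2 * Δt)) * ‖dX 0‖ ^ 2
        + W (Gs (X 0)) / Δt := by
  have hΔt' : Δt ≠ 0 := ne_of_gt hΔt
  set E : ℕ → ℝ := fun k =>
    ρf / (2 * Δt) * ‖u k‖ ^ 2 + δρ / (2 * Δt) * ‖dX k‖ ^ 2 + W (Gs (X k)) / Δt with hE
  have key : ∀ n, n ≤ m - 1 →
      E (n + 1) + ν / 4 * ‖G (u (n + 1)) + G (u n)‖ ^ 2 ≤ E n := by
    intro n hn
    -- pressure term vanishes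
    have hpress : ⟪d ((2 : ℝ)⁻¹ • (u (n + 1) + u n)), p (n + 1)⟫ = 0 := by
      rw [map_smul, map_add, real_inner_smul_left, inner_add_left,
        (h2 n hn (p (n + 1))).1, (h2 n hn (p (n + 1))).2]
      ring
    -- convection term vanishes
    have hbterm := hb ((2 : ℝ)⁻¹ • (u (n + 1) + u n)) ((2 : ℝ)⁻¹ • (u (n + 1) + u n))
    -- kinetic inner product
    have hkin : ⟪Δt⁻¹ • (u (n + 1) - u n), (2 : ℝ)⁻¹ • (u (n + 1) + u n)⟫
        = Δt⁻¹ * 2⁻¹ * (‖u (n + 1)‖ ^ 2 - ‖u n‖ ^ 2) := cn_inner_avg _ _ _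
    -- viscous term
    have hvisc : ‖G ((2 : ℝ)⁻¹ • (u (n + 1) + u n))‖ ^ 2
        = 4⁻¹ * ‖G (u (n + 1)) + G (u n)‖ ^ 2 := by
      rw [map_smul, map_add, norm_smul]
      norm_num; ring
    -- coupling identity from h5
    have hc : c (lam (n + 1)) (w (n + 1))
        = c (lam (n + 1)) (Δt⁻¹ • (X (n + 1) - X n)) := by
      have h := h5 n hn (lam (n + 1))
      rw [map_sub] at h; linarith
    -- structure equation at Y = Δt⁻¹ • (X (n+1) - X n)
    have h4' := h4 n hn (Δt⁻¹ • (X (n + 1) - X n))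
    have hdXin : ⟪Δt⁻¹ • (dX (n + 1) - dX n), Δt⁻¹ • (X (n + 1) - X n)⟫
        = Δt⁻¹ * 2⁻¹ * (‖dX (n + 1)‖ ^ 2 - ‖dX n‖ ^ 2) := by
      rw [← h3 n hn]; exact cn_inner_avg _ _ _
    -- elastic term
    have hel : ⟪P (Gs (X (n + 1))), Gs (Δt⁻¹ • (X (n + 1) - X n))⟫
        = Δt⁻¹ * (DW (Gs (X (n + 1)))) (Gs (X (n + 1)) - Gs (X n)) := by
      rw [map_smul, map_sub, real_inner_smul_right, hP]
    have hgrad : (DW (Gs (X (n + 1)))) (Gs (X n) - Gs (X (n + 1)))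
        ≤ W (Gs (X n)) - W (Gs (X (n + 1))) := cn_grad_ineq W hW DW hDW _ _
    have hgrad' : W (Gs (X (n + 1))) - W (Gs (X n))
        ≤ (DW (Gs (X (n + 1)))) (Gs (X (n + 1)) - Gs (X n)) := by
      have : (DW (Gs (X (n + 1)))) (Gs (X n) - Gs (X (n + 1)))
          = -((DW (Gs (X (n + 1)))) (Gs (X (n + 1)) - Gs (X n))) := by
        rw [← map_neg]; congr 1; abel
      linarith [hgrad, this ▸ hgrad]
    -- combine
    have heq := h1 n hn
    rw [hkin, hbterm, hpress, hvisc, hc] at heq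
    rw [hdXin, hel] at h4'
    -- h4' : δρ * (Δt⁻¹*2⁻¹*(...)) + Δt⁻¹ * DW ... - c ... = 0
    have hDWge : Δt⁻¹ * (W (Gs (X (n + 1))) - W (Gs (X n)))
        ≤ Δt⁻¹ * (DW (Gs (X (n + 1)))) (Gs (X (n + 1)) - Gs (X n)) := by
      exact mul_le_mul_of_nonneg_left hgrad' (le_of_lt (inv_pos.mpr hΔt))
    have e1 : ρf / (2 * Δt) = ρf * (Δt⁻¹ * 2⁻¹) := by
      rw [div_eq_mul_inv, mul_inv]; ring
    have e2 : δρ / (2 * Δt) = δρ * (Δt⁻¹ * 2⁻¹) := by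
      rw [div_eq_mul_inv, mul_inv]; ring
    have e3 : ∀ r : ℕ, W (Gs (X r)) / Δt = Δt⁻¹ * W (Gs (X r)) := by
      intro r; rw [div_eq_mul_inv, mul_comm]
    simp only [hE, e1, e2, e3]
    nlinarith [heq, h4', hDWge]
  -- summed estimate by induction
  have main : ∀ k, k ≤ m →
      E k + ν / 4 * ∑ n ∈ Finset.Icc 1 k, ‖G (u n) + G (u (n - 1))‖ ^ 2 ≤ E 0 := by
    intro k
    induction k with
    | zero => intro _; simp
    | succ k ih =>
      intro hk
      have hk' : k ≤ m := le_of_lt (Nat.lt_of_lt_of_le (Nat.lt_succ_self k) hk)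
      have hkm1 : k ≤ m - 1 := Nat.le_sub_one_of_lt (Nat.lt_of_succ_le hk)
      have hsum : ∑ n ∈ Finset.Icc 1 (k + 1), ‖G (u n) + G (u (n - 1))‖ ^ 2
          = (∑ n ∈ Finset.Icc 1 k, ‖G (u n) + G (u (n - 1))‖ ^ 2)
            + ‖G (u (k + 1)) + G (u k)‖ ^ 2 := by
        rw [Finset.sum_Icc_succ_top (Nat.one_le_iff_ne_zero.mpr (Nat.succ_ne_zero k))]
        simp
      have := key k hkm1
      have := ih hk'
      rw [hsum]
      linarith
  have := main m le_rfl
  simp only [hE] at this ⊢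
  linarith
end

section
/- Per-step unconditional stability of the Backward Euler scheme (abstract form of the stability estimate recalled from [BCG15]). Assume given u₀, u₁ ∈ V, p ∈ Q, X₋, X₀, X₁ ∈ S, λ ∈ Λ and w ∈ S, and write F_j = G_s X_j for j ∈ {−, 0, 1}. Assume: (i) ρ_f ⟨(u₁ − u₀)/Δt, u₁⟩ + b(u₁, u₁, u₁) + ν‖G u₁‖² − ⟨d u₁, p⟩ + c(λ, w) = 0; (ii) ⟨d u₁, q⟩ = 0 for all q ∈ Q; (iii) δρ ⟨(X₁ − 2X₀ + X₋)/Δt², Y⟩ + ⟨P(F₁), G_s Y⟩ − c(λ, Y) = 0 for all Y ∈ S; (iv) c(μ, w − (X₁ − X₀)/Δt) = 0 for all μ ∈ Λ. Then (ρ_f/(2Δt))(‖u₁‖² − ‖u₀‖²) + ν‖G u₁‖² + (W(F₁) − W(F₀))/Δt + (δρ/(2Δt))(‖(X₁ − X₀)/Δt‖² − ‖(X₀ − X₋)/Δt‖²) ≤ 0. -/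
open scoped RealInnerProductSpace

lemma half_norm_sq_le_inner_sub {E : Type*} [NormedAddCommGroup E] [InnerProductSpace ℝ E]
    (a b : E) : (‖a‖ ^ 2 - ‖b‖ ^ 2) / 2 ≤ ⟪a - b, a⟫ := by
  have h1 : ⟪a - b, a⟫ = ‖a‖ ^ 2 - ⟪b, a⟫ := by
    rw [inner_sub_left, real_inner_self_eq_norm_sq]
  have h2 : ⟪b, a⟫ ≤ ‖b‖ * ‖a‖ := real_inner_le_norm b a
  nlinarith [sq_nonneg (‖a‖ - ‖b‖)]

lemma convex_gradient_ineq {E : Type*} [NormedAddCommGroup E] [InnerProductSpace ℝ E]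
    (W : E → ℝ) (hW : ConvexOn ℝ Set.univ W)
    (DW : E → E →L[ℝ] ℝ) (hDW : ∀ F : E, HasFDerivAt W (DW F) F)
    (x y : E) : DW x (y - x) ≤ W y - W x := by
  rcases eq_or_ne y x with rfl | hne
  · simp
  set g : ℝ → ℝ := fun t => W (x + t • (y - x)) with hg
  have hgc : ConvexOn ℝ Set.univ g := by
    have h := hW.comp_affineMap (AffineMap.lineMap x y : ℝ →ᵃ[ℝ] E)
    have heq : g = W ∘ (AffineMap.lineMap x y : ℝ →ᵃ[ℝ] E) := by
      funext t; simp only [g, Function.comp_apply, AffineMap.lineMap_apply_module]; congr 1; module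
    rw [heq]; simpa using h
  have hline : ∀ t : ℝ, HasDerivAt (fun t : ℝ => x + t • (y - x)) (y - x) t := by
    intro t
    simpa using ((hasDerivAt_id t).smul_const (y - x)).const_add x
  have hgd : HasDerivAt g (DW x (y - x)) 0 := by
    have hWx : HasFDerivAt W (DW x) (x + (0:ℝ) • (y - x)) := by simpa using hDW x
    exact hWx.comp_hasDerivAt 0 (hline 0)
  have := hgc.deriv_le_slope (Set.mem_univ (0:ℝ)) (Set.mem_univ (1:ℝ)) one_pos
    hgd.differentiableAt
  rw [hgd.deriv] at this
  simpa [g, slope_def_field] using this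



theorem backward_euler_per_step_stability
    {V Q S M N Λ : Type*}
    [NormedAddCommGroup V] [InnerProductSpace ℝ V]
    [NormedAddCommGroup Q] [InnerProductSpace ℝ Q]
    [NormedAddCommGroup S] [InnerProductSpace ℝ S]
    [NormedAddCommGroup M] [InnerProductSpace ℝ M]
    [NormedAddCommGroup N] [InnerProductSpace ℝ N]
    [NormedAddCommGroup Λ] [InnerProductSpace ℝ Λ]
    (G : V →ₗ[ℝ] M) (d : V →ₗ[ℝ] Q) (Gs : S →ₗ[ℝ] N)
    (c : Λ →ₗ[ℝ] S →ₗ[ℝ] ℝ) (b : V →ₗ[ℝ] V →ₗ[ℝ] V →ₗ[ℝ] ℝ)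
    (hb : ∀ v w : V, b v w w = 0)
    (ρf δρ ν Δt : ℝ)
    (hρf : 0 ≤ ρf) (hδρ : 0 ≤ δρ) (hν : 0 ≤ ν) (hΔt : 0 < Δt)
    (W : N → ℝ) (hW : ConvexOn ℝ Set.univ W)
    (DW : N → N →L[ℝ] ℝ) (hDW : ∀ F : N, HasFDerivAt W (DW F) F)
    (P : N → N) (hP : ∀ F H : N, ⟪P F, H⟫ = DW F H)
    (u₀ u₁ : V) (p : Q) (Xm X₀ X₁ : S) (lam : Λ) (w : S)
    (h1 : ρf * ⟪Δt⁻¹ • (u₁ - u₀), u₁⟫ + b u₁ u₁ u₁ + ν * ‖G u₁‖ ^ 2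
        - ⟪d u₁, p⟫ + c lam w = 0)
    (h2 : ∀ q : Q, ⟪d u₁, q⟫ = 0)
    (h3 : ∀ Y : S, δρ * ⟪(Δt ^ 2)⁻¹ • (X₁ - (2 : ℝ) • X₀ + Xm), Y⟫
        + ⟪P (Gs X₁), Gs Y⟫ - c lam Y = 0)
    (h4 : ∀ μ : Λ, c μ (w - Δt⁻¹ • (X₁ - X₀)) = 0) :
    (ρf / (2 * Δt)) * (‖u₁‖ ^ 2 - ‖u₀‖ ^ 2) + ν * ‖G u₁‖ ^ 2
      + (W (Gs X₁) - W (Gs X₀)) / Δt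
      + (δρ / (2 * Δt)) * (‖Δt⁻¹ • (X₁ - X₀)‖ ^ 2 - ‖Δt⁻¹ • (X₀ - Xm)‖ ^ 2) ≤ 0 := by

  have hΔ : (0:ℝ) < Δt⁻¹ := inv_pos.mpr hΔt
  set v₁ : S := Δt⁻¹ • (X₁ - X₀) with hv₁
  set v₀ : S := Δt⁻¹ • (X₀ - Xm) with hv₀
  have e1 : ρf * ⟪Δt⁻¹ • (u₁ - u₀), u₁⟫ + ν * ‖G u₁‖ ^ 2 + c lam w = 0 := by
    rw [hb u₁ u₁, h2 p] at h1; linarith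
  have e4 : c lam w = c lam v₁ := by
    have h := h4 lam; rw [map_sub] at h; linarith
  have e3 := h3 v₁
  have key : ρf * ⟪Δt⁻¹ • (u₁ - u₀), u₁⟫ + ν * ‖G u₁‖ ^ 2
      + δρ * ⟪(Δt ^ 2)⁻¹ • (X₁ - (2 : ℝ) • X₀ + Xm), v₁⟫ + ⟪P (Gs X₁), Gs v₁⟫ = 0 := by
    linarith
  have hA : ρf / (2 * Δt) * (‖u₁‖ ^ 2 - ‖u₀‖ ^ 2) ≤ ρf * ⟪Δt⁻¹ • (u₁ - u₀), u₁⟫ := by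
    have h := mul_le_mul_of_nonneg_left (half_norm_sq_le_inner_sub u₁ u₀)
      (mul_nonneg hρf hΔ.le)
    have hrw : ρf / (2 * Δt) * (‖u₁‖ ^ 2 - ‖u₀‖ ^ 2)
        = ρf * Δt⁻¹ * ((‖u₁‖ ^ 2 - ‖u₀‖ ^ 2) / 2) := by
      rw [div_eq_mul_inv, mul_inv]; ring
    rw [hrw, real_inner_smul_left]
    calc ρf * Δt⁻¹ * ((‖u₁‖ ^ 2 - ‖u₀‖ ^ 2) / 2) ≤ ρf * Δt⁻¹ * ⟪u₁ - u₀, u₁⟫ := h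
      _ = ρf * (Δt⁻¹ * ⟪u₁ - u₀, u₁⟫) := by ring
  have hvv : (Δt ^ 2)⁻¹ • (X₁ - (2 : ℝ) • X₀ + Xm) = Δt⁻¹ • (v₁ - v₀) := by
    have h : v₁ - v₀ = Δt⁻¹ • (X₁ - (2 : ℝ) • X₀ + Xm) := by
      rw [hv₁, hv₀, ← smul_sub]; congr 1; module
    rw [h, smul_smul, ← mul_inv, ← sq]
  have hB : δρ / (2 * Δt) * (‖v₁‖ ^ 2 - ‖v₀‖ ^ 2)
      ≤ δρ * ⟪(Δt ^ 2)⁻¹ • (X₁ - (2 : ℝ) • X₀ + Xm), v₁⟫ := by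
    rw [hvv]
    have h := mul_le_mul_of_nonneg_left (half_norm_sq_le_inner_sub v₁ v₀)
      (mul_nonneg hδρ hΔ.le)
    have hrw : δρ / (2 * Δt) * (‖v₁‖ ^ 2 - ‖v₀‖ ^ 2)
        = δρ * Δt⁻¹ * ((‖v₁‖ ^ 2 - ‖v₀‖ ^ 2) / 2) := by
      rw [div_eq_mul_inv, mul_inv]; ring
    rw [hrw, real_inner_smul_left]
    calc δρ * Δt⁻¹ * ((‖v₁‖ ^ 2 - ‖v₀‖ ^ 2) / 2) ≤ δρ * Δt⁻¹ * ⟪v₁ - v₀, v₁⟫ := h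
      _ = δρ * (Δt⁻¹ * ⟪v₁ - v₀, v₁⟫) := by ring
  have hC : (W (Gs X₁) - W (Gs X₀)) / Δt ≤ ⟪P (Gs X₁), Gs v₁⟫ := by
    have hGv : Gs v₁ = Δt⁻¹ • (Gs X₁ - Gs X₀) := by rw [hv₁, map_smul, map_sub]
    have hgrad := convex_gradient_ineq W hW DW hDW (Gs X₁) (Gs X₀)
    have hinner : W (Gs X₁) - W (Gs X₀) ≤ ⟪P (Gs X₁), Gs X₁ - Gs X₀⟫ := by
      have h1 : ⟪P (Gs X₁), Gs X₀ - Gs X₁⟫ ≤ W (Gs X₀) - W (Gs X₁) := by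
        rw [hP]; exact hgrad
      have h2 : ⟪P (Gs X₁), Gs X₁ - Gs X₀⟫ = -⟪P (Gs X₁), Gs X₀ - Gs X₁⟫ := by
        rw [← inner_neg_right]; congr 1; abel
      linarith
    rw [hGv, real_inner_smul_right, div_eq_inv_mul]
    exact mul_le_mul_of_nonneg_left hinner hΔ.le
  linarith
end
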